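/- Let H be a complex Hilbert space and let A, B ∈ B₊(H). If A ≪ B, then the closure of the range of A is contained in the closure of the range of B. -/

import Mathlib

open ContinuousLinearMap Filter Topology

variable {H : Type} [NormedAddCommGroup H] [InnerProductSpace ℂ H] [CompleteSpace H]

/-- The Loewner order on bounded operators: `A ≤ B` iff `B - A` is positive. -/
def Loewner (A B : H →L[ℂ] H) : Prop := (B - A).IsPositive

/-- `A` is `B`-absolutely continuous: `A` is the strong-operator-topology limit of a
monotone increasing sequence of positive operators, each dominated by a nonnegative
multiple of `B`. -/
def AbsCont (A B : H →L[ℂ] H) : Prop :=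
  ∃ f : ℕ → H →L[ℂ] H,
    (∀ n, (f n).IsPositive) ∧
    (∀ m n, m ≤ n → Loewner (f m) (f n)) ∧
    (∀ n, ∃ c : ℝ, 0 ≤ c ∧ Loewner (f n) (c • B)) ∧
    (∀ x : H, Tendsto (fun n => f n x) atTop (𝓝 (A x)))

/-- `A` and `B` are singular: the only positive operator below both (in the Loewner
order) is `0`. -/
def Singular (A B : H →L[ℂ] H) : Prop :=
  ∀ C : H →L[ℂ] H, C.IsPositive → Loewner C A → Loewner C B → C = 0

/-- An operator range: a subspace which is the range of some bounded operator. -/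
def IsOpRange (M : Submodule ℂ H) : Prop := ∃ S : H →L[ℂ] H, LinearMap.range (S : H →L[ℂ] H).toLinearMap = M

local notation "⟪" x ", " y "⟫" => @inner ℂ _ _ x y

/-- A positive operator with `⟪T x, x⟫ = 0` kills `x`. -/
lemma aux_pos_apply_eq_zero {T : H →L[ℂ] H} (hT : T.IsPositive) {x : H}
    (hx : ⟪T x, x⟫ = 0) : T x = 0 := by
  have hsym : (T : H →ₗ[ℂ] H).IsSymmetric :=
    hT.1
  have key : ∀ y : H, (⟪T x, y⟫).re = 0 := by
    intro y
    set a : ℝ := (⟪T y, y⟫).re with ha_def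
    set b : ℝ := (⟪T x, y⟫).re with hb_def
    have ha : 0 ≤ a := by simpa using (Complex.le_def.mp (hT.inner_nonneg_left y)).1
    have hrexy : (⟪T y, x⟫).re = b := by
      have h := hsym x y
      simp only [ContinuousLinearMap.coe_coe] at h
      rw [← Complex.conj_re, inner_conj_symm, ← h, hb_def]
    have hq : ∀ t : ℝ, 0 ≤ a * t ^ 2 + 2 * b * t := by
      intro t
      have h0 := hT.inner_nonneg_left (x + (t : ℂ) • y)
      have expand : ⟪T (x + (t:ℂ) • y), x + (t:ℂ) • y⟫
          = ⟪T x, x⟫ + (t:ℂ) * ⟪T x, y⟫ + (t:ℂ) * ⟪T y, x⟫ + (t:ℂ) * ((t:ℂ) * ⟪T y, y⟫) := by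
        rw [map_add, map_smul, inner_add_left, inner_add_right, inner_add_right,
          inner_smul_left, inner_smul_right, inner_smul_left, inner_smul_right,
          Complex.conj_ofReal]
        ring
      rw [expand] at h0; replace h0 := (Complex.le_def.mp h0).1
      simp only [Complex.add_re, Complex.re_ofReal_mul, hx, Complex.zero_re] at h0
      rw [hrexy] at h0
      rw [← hb_def, ← ha_def] at h0
      nlinarith [h0]
    have h1 : 0 < a + 1 := by linarith
    have key2 := hq (-b / (a + 1))
    have e : a * (-b/(a+1))^2 + 2*b*(-b/(a+1)) = -(b^2*(a+2))/(a+1)^2 := by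
      field_simp; ring
    rw [e] at key2
    have h2 : (0:ℝ) < (a+1)^2 := by positivity
    rw [le_div_iff₀ h2] at key2
    have hb2 : b ^ 2 = 0 := by nlinarith [sq_nonneg b]
    exact pow_eq_zero_iff two_ne_zero |>.mp hb2
  have keyall : ∀ y : H, ⟪T x, y⟫ = 0 := by
    intro y
    have h1 := key y
    have h2 := key (Complex.I • y)
    rw [inner_smul_right] at h2
    simp [Complex.mul_re, Complex.I_re, Complex.I_im] at h2
    exact Complex.ext h1 (by simpa using h2)
  exact inner_self_eq_zero.mp (keyall (T x))

/-- If `A ≪ B` for positive operators, then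
`closure (ran A) ⊆ closure (ran B)`. -/
theorem stmt7 (A B : H →L[ℂ] H) (hA : A.IsPositive) (hB : B.IsPositive)
    (h : AbsCont A B) :
    closure (Set.range ⇑A) ⊆ closure (Set.range ⇑B) := by
  obtain ⟨f, hfpos, hmono, hdom, hlim⟩ := h
  apply closure_minimal _ isClosed_closure
  rintro _ ⟨z, rfl⟩
  set K : Submodule ℂ H := LinearMap.range B.toLinearMap with hK
  have horth : A z ∈ Kᗮᗮ := by
    rw [Submodule.mem_orthogonal]
    intro y hy
    have hBy : B y = 0 := by
      apply aux_pos_apply_eq_zero hB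
      exact hy (B y) ⟨y, rfl⟩
    have hfy : ∀ n, f n y = 0 := by
      intro n
      obtain ⟨c, hc, hcB⟩ := hdom n
      apply aux_pos_apply_eq_zero (hfpos n)
      have h1 : 0 ≤ (⟪f n y, y⟫).re := by simpa using (Complex.le_def.mp ((hfpos n).inner_nonneg_left y)).1
      have h2 := (Complex.le_def.mp (hcB.inner_nonneg_left y)).1
      simp only [sub_apply, smul_apply, hBy, smul_zero, zero_sub, inner_neg_left,
        map_neg, RCLike.re_to_complex, Complex.neg_re, Complex.zero_re] at h2
      have h3 := ((isPositive_iff_complex (f n)).mp (hfpos n) y).1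
      have h4 : (⟪f n y, y⟫).re = 0 := le_antisymm (by linarith) h1
      rw [← h3]
      simp [RCLike.re_to_complex, h4]
    have hAy : A y = 0 := by
      refine tendsto_nhds_unique (hlim y) ?_
      simp only [hfy]
      exact (tendsto_const_nhds : Tendsto (fun _ : ℕ => (0 : H)) atTop (𝓝 0))
    have hsymA : (A : H →ₗ[ℂ] H).IsSymmetric := hA.1
    have hs := hsymA y z
    simp only [ContinuousLinearMap.coe_coe] at hs
    rw [← hs, hAy, inner_zero_left]
  rw [Submodule.orthogonal_orthogonal_eq_closure] at horth
  have hset : (K : Set H) = Set.range ⇑B := by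
    rw [hK]; exact LinearMap.coe_range _
  have hmem : A z ∈ closure (K : Set H) := by
    rw [← Submodule.topologicalClosure_coe]
    exact horth
  rwa [hset] at hmem
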